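/- Let a, b be sequences in a field with all a_k and b_k nonzero, and let x be a sequence satisfying x_{n+2} = a_n * x_{n+1} + b_n * x_n for all n ≥ 0, with x_1 ≠ 0. Assume t is an element of the field such that t * x_{k+1} ≠ 0 for relevant k (so denominators are nonzero). Then for all n ≥ 1: the sum over k from 1 to n of (t^{k-1} / (a_0 * a_1 * ... * a_{k-1})) * (b_{k-1} * x_{k-1} + (t-1) * x_{k+1}) / x_1 equals (t^n / (a_0 * ... * a_{n-1})) * x_{n+1} / x_1 - 1. -/

import Mathlib

theorem sury_gen {F : Type*} [Field F] (a b x : ℕ → F) (t : F)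
    (ha : ∀ k, a k ≠ 0) (hb : ∀ k, b k ≠ 0) (hx1 : x 1 ≠ 0)
    (hrec : ∀ n, x (n + 2) = a n * x (n + 1) + b n * x n)
    (ht : ∀ k, t * x (k + 1) ≠ 0) (n : ℕ) (hn : 1 ≤ n) :
    ∑ k ∈ Finset.Icc 1 n,
        (t ^ (k - 1) / ∏ i ∈ Finset.range k, a i) *
          ((b (k - 1) * x (k - 1) + (t - 1) * x (k + 1)) / x 1) =
      (t ^ n / ∏ i ∈ Finset.range n, a i) * (x (n + 1) / x 1) - 1 := by
  induction n with
  | zero => omega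
  | succ m ih =>
    rcases Nat.eq_zero_or_pos m with hm | hm
    · subst hm
      simp only [Finset.Icc_self, Finset.sum_singleton, Finset.prod_range_one, pow_one,
        Nat.sub_self, pow_zero]
      rw [show (1:ℕ) + 1 = 2 from rfl, hrec 0]
      simp only [zero_add, Finset.prod_range_one]
      have ha0 := ha 0
      field_simp
      ring
    · rw [Finset.sum_Icc_succ_top (by omega), ih hm, Finset.prod_range_succ]
      have hprod : (∏ i ∈ Finset.range m, a i) ≠ 0 :=
        Finset.prod_ne_zero_iff.2 fun i _ => ha i
      have ham := ha m
      simp only [Nat.add_sub_cancel]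
      rw [show m + 1 + 1 = m + 2 from rfl, hrec m]
      field_simp
      ring
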